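/- Let n ≥ 1, m ≥ 0 be integers and let X_1, …, X_n be independent identically distributed random variables, each uniformly distributed on [0, 1]. Then the m-th moment of S_n = X_1 + ⋯ + X_n is E[S_n^m] = S(m+n, n) · m! · n!/(m+n)!, where S(m+n, n) is the Stirling number of the second kind. -/

import Mathlib

open Finset MeasureTheory ProbabilityTheory

/-- The Stirling number of the second kind `S(N, k)`: the number of partitions
of an `N`-element set into `k` nonempty blocks, given by the standard
recurrence `S(0,0) = 1`, `S(0,k+1) = 0`, `S(N+1,0) = 0`,
`S(N+1,k+1) = (k+1) S(N,k+1) + S(N,k)`. -/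
def stirlingSecond : ℕ → ℕ → ℕ
  | 0, 0 => 1
  | 0, _ + 1 => 0
  | _ + 1, 0 => 0
  | N + 1, k + 1 => (k + 1) * stirlingSecond N (k + 1) + stirlingSecond N k

lemma stirling_alt : ∀ (N n : ℕ),
    ∑ j ∈ range (n+1), (-1:ℝ)^j * (n.choose j : ℝ) * ((n:ℝ) - j)^N
      = (n.factorial : ℝ) * (stirlingSecond N n : ℝ) := by
  intro N
  induction N with
  | zero =>
    intro n
    simp only [pow_zero, mul_one]
    cases n with
    | zero => simp [stirlingSecond]
    | succ k =>
      have h := Int.alternating_sum_range_choose_of_ne (n := k+1) (by omega)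
      have h2 : ((∑ i ∈ range (k+2), (-1:ℤ)^i * ((k+1).choose i) : ℤ) : ℝ) = 0 := by
        rw [h]; norm_num
      push_cast at h2
      rw [h2]
      simp [stirlingSecond]
  | succ N ih =>
    intro n
    cases n with
    | zero => simp [stirlingSecond]
    | succ n =>
      have key : ∀ j ∈ range (n+2), (-1:ℝ)^j * ((n+1).choose j : ℝ) * (((n:ℝ)+1) - j)^(N+1)
          = ((n:ℝ)+1) * ((-1:ℝ)^j * (n.choose j : ℝ) * (((n:ℝ)+1) - j)^N) := by
        intro j hj
        have hj' : j ≤ n + 1 := by simpa [Nat.lt_succ_iff] using mem_range.mp hj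
        have h2 : (n.choose j : ℝ) * ((n:ℝ)+1) = ((n+1).choose j : ℝ) * (((n:ℝ)+1) - (j:ℝ)) := by
          have h0 := Nat.choose_mul_succ_eq n j
          have h1 : ((n.choose j * (n+1) : ℕ) : ℝ) = (((n+1).choose j * (n+1-j) : ℕ) : ℝ) := by
            rw [h0]
          push_cast [Nat.cast_sub hj'] at h1
          linarith
        rw [pow_succ]
        linear_combination (-((-1:ℝ)^j * (((n:ℝ)+1) - (j:ℝ))^N)) * h2
      push_cast
      rw [Finset.sum_congr rfl key, ← Finset.mul_sum]
      have hdrop : ∑ j ∈ range (n+2), (-1:ℝ)^j * (n.choose j : ℝ) * (((n:ℝ)+1) - j)^N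
          = ∑ j ∈ range (n+1), (-1:ℝ)^j * (n.choose j : ℝ) * (((n:ℝ)+1) - j)^N := by
        rw [Finset.sum_range_succ, Nat.choose_succ_self]
        simp
      rw [hdrop]
      have hT : ∑ j ∈ range (n+2), (-1:ℝ)^j * ((n+1).choose j : ℝ) * (((n:ℝ)+1) - j)^N
          = (∑ k ∈ range (n+1),
              (-((-1:ℝ)^k * (n.choose k : ℝ) * ((n:ℝ) - k)^N)
                - (-1:ℝ)^k * (n.choose (k+1) : ℝ) * ((n:ℝ) - k)^N))
            + ((n:ℝ)+1)^N := by
        rw [Finset.sum_range_succ'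
          (fun j => (-1:ℝ)^j * ((n+1).choose j : ℝ) * (((n:ℝ)+1) - j)^N) (n+1)]
        congr 1
        · refine Finset.sum_congr rfl fun k hk => ?_
          rw [Nat.choose_succ_succ]
          push_cast
          have e : ((n:ℝ)+1) - ((k:ℝ)+1) = (n:ℝ) - k := by ring
          rw [e, pow_succ]
          ring
        · norm_num
      have hV : ∑ k ∈ range (n+1), (-1:ℝ)^k * (n.choose (k+1) : ℝ) * ((n:ℝ) - k)^N
          = ∑ k ∈ range n, (-1:ℝ)^k * (n.choose (k+1) : ℝ) * ((n:ℝ) - k)^N := by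
        rw [Finset.sum_range_succ, Nat.choose_succ_self]; simp
      have hU' : ∑ j ∈ range (n+1), (-1:ℝ)^j * (n.choose j : ℝ) * (((n:ℝ)+1) - j)^N
          = (∑ k ∈ range n, -((-1:ℝ)^k * (n.choose (k+1) : ℝ) * ((n:ℝ) - k)^N))
            + ((n:ℝ)+1)^N := by
        rw [Finset.sum_range_succ'
          (fun j => (-1:ℝ)^j * (n.choose j : ℝ) * (((n:ℝ)+1) - j)^N) n]
        congr 1
        · refine Finset.sum_congr rfl fun k hk => ?_
          push_cast
          have e : ((n:ℝ)+1) - ((k:ℝ)+1) = (n:ℝ) - k := by ring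
          rw [e, pow_succ]
          ring
        · norm_num
      have hU : ∑ j ∈ range (n+1), (-1:ℝ)^j * (n.choose j : ℝ) * (((n:ℝ)+1) - j)^N
          = (∑ j ∈ range (n+2), (-1:ℝ)^j * ((n+1).choose j : ℝ) * (((n:ℝ)+1) - j)^N)
            + ∑ j ∈ range (n+1), (-1:ℝ)^j * (n.choose j : ℝ) * ((n:ℝ) - j)^N := by
        rw [hT, hU', Finset.sum_sub_distrib, Finset.sum_neg_distrib,
          Finset.sum_neg_distrib, hV]
        ring
      rw [hU]
      have ih1 := ih (n+1)
      rw [(by omega : n+1+1 = n+2)] at ih1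
      push_cast at ih1
      rw [ih1, ih n]
      have hs : stirlingSecond (N+1) (n+1)
          = (n+1) * stirlingSecond N (n+1) + stirlingSecond N n := rfl
      rw [hs]
      push_cast [Nat.factorial_succ]
      ring

noncomputable def Fm (n m : ℕ) (s : ℝ) : ℝ :=
  (m.factorial : ℝ) / ((m+n).factorial : ℝ) *
    ∑ j ∈ range (n+1), (-1:ℝ)^j * (n.choose j : ℝ) * (s + n - j)^(m+n)

lemma integ_step (K : ℕ) (c : ℝ) :
    ∫ t in Set.Icc (0:ℝ) 1, (c + t)^K = ((c+1)^(K+1) - c^(K+1)) / (K+1) := by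
  rw [MeasureTheory.integral_Icc_eq_integral_Ioc,
    ← intervalIntegral.integral_of_le (by norm_num : (0:ℝ) ≤ 1)]
  rw [intervalIntegral.integral_comp_add_left (fun x => x ^ K) c]
  rw [integral_pow]
  norm_num

lemma Fm_step (n m : ℕ) (s : ℝ) :
    ∫ t in Set.Icc (0:ℝ) 1, Fm n m (s + t) = Fm (n+1) m s := by
  unfold Fm
  rw [MeasureTheory.integral_const_mul]
  rw [MeasureTheory.integral_finset_sum _
    (fun j hj => by
      apply Continuous.integrableOn_Icc
      fun_prop)]
  have hterm : ∀ j ∈ range (n+1),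
      ∫ t in Set.Icc (0:ℝ) 1, (-1:ℝ)^j * (n.choose j : ℝ) * (s + t + n - j)^(m+n)
      = (-1:ℝ)^j * (n.choose j : ℝ) *
          (((s + n - j + 1)^(m+n+1) - (s + n - j)^(m+n+1)) / (m+n+1)) := by
    intro j hj
    rw [MeasureTheory.integral_const_mul]
    congr 1
    have e : (fun t : ℝ => (s + t + (n:ℝ) - j)^(m+n)) = fun t => ((s + (n:ℝ) - j) + t)^(m+n) := by
      funext t; ring_nf
    rw [show (∫ t in Set.Icc (0:ℝ) 1, (s + t + (n:ℝ) - j)^(m+n))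
        = ∫ t in Set.Icc (0:ℝ) 1, ((s + (n:ℝ) - j) + t)^(m+n) from by rw [e]]
    rw [integ_step (m+n) (s + (n:ℝ) - j)]
    push_cast
    ring_nf
  rw [Finset.sum_congr rfl hterm]
  have pascal : ∀ (A : ℕ → ℝ),
      ∑ j ∈ range (n+2), (-1:ℝ)^j * ((n+1).choose j : ℝ) * A j
      = (∑ j ∈ range (n+1), (-1:ℝ)^j * (n.choose j : ℝ) * A j)
        - ∑ j ∈ range (n+1), (-1:ℝ)^j * (n.choose j : ℝ) * A (j+1) := by
    intro A
    have hY : ∑ k ∈ range (n+1), (-1:ℝ)^k * (n.choose (k+1) : ℝ) * A (k+1)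
        = ∑ k ∈ range n, (-1:ℝ)^k * (n.choose (k+1) : ℝ) * A (k+1) := by
      rw [Finset.sum_range_succ, Nat.choose_succ_self]; simp
    have hW : ∑ j ∈ range (n+2), (-1:ℝ)^j * ((n+1).choose j : ℝ) * A j
        = (∑ k ∈ range (n+1), (-((-1:ℝ)^k * (n.choose k : ℝ) * A (k+1))
            - (-1:ℝ)^k * (n.choose (k+1) : ℝ) * A (k+1))) + A 0 := by
      rw [Finset.sum_range_succ' (fun j => (-1:ℝ)^j * ((n+1).choose j : ℝ) * A j) (n+1)]
      congr 1
      · refine Finset.sum_congr rfl fun k hk => ?_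
        rw [Nat.choose_succ_succ]
        push_cast
        rw [pow_succ]
        ring
      · norm_num
    have hS1 : ∑ j ∈ range (n+1), (-1:ℝ)^j * (n.choose j : ℝ) * A j
        = (∑ k ∈ range n, -((-1:ℝ)^k * (n.choose (k+1) : ℝ) * A (k+1))) + A 0 := by
      rw [Finset.sum_range_succ' (fun j => (-1:ℝ)^j * (n.choose j : ℝ) * A j) n]
      congr 1
      · refine Finset.sum_congr rfl fun k hk => ?_
        push_cast
        rw [pow_succ]; ring
      · norm_num
    rw [hW, Finset.sum_sub_distrib, Finset.sum_neg_distrib, hS1,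
      Finset.sum_neg_distrib, hY]
    ring
  set A : ℕ → ℝ := fun j => (s + (n:ℝ) + 1 - j)^(m+n+1) with hA
  have eR : ∑ j ∈ range (n+1+1), (-1:ℝ)^j * ((n+1).choose j : ℝ)
        * (s + ((n+1 : ℕ):ℝ) - j)^(m+(n+1))
      = ∑ j ∈ range (n+2), (-1:ℝ)^j * ((n+1).choose j : ℝ) * A j := by
    refine Finset.sum_congr rfl fun j hj => ?_
    simp only [hA]
    push_cast
    ring_nf
  have eL : ∀ j ∈ range (n+1),
      (-1:ℝ)^j * (n.choose j : ℝ) *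
        (((s + (n:ℝ) - j + 1)^(m+n+1) - (s + (n:ℝ) - j)^(m+n+1)) / ((m:ℝ)+n+1))
      = (1/((m:ℝ)+(n:ℝ)+1)) * ((-1:ℝ)^j * (n.choose j : ℝ) * A j
          - (-1:ℝ)^j * (n.choose j : ℝ) * A (j+1)) := by
    intro j hj
    simp only [hA]
    push_cast
    ring
  rw [Finset.sum_congr rfl eL, ← Finset.mul_sum, Finset.sum_sub_distrib, eR, pascal A]
  have hfac : (((m+(n+1)).factorial : ℕ) : ℝ) = ((m:ℝ)+n+1) * ((m+n).factorial : ℝ) := by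
    rw [show m+(n+1) = (m+n)+1 from rfl, Nat.factorial_succ]
    push_cast
    ring
  rw [hfac]
  have h1 : ((m+n).factorial : ℝ) ≠ 0 := Nat.cast_ne_zero.mpr (Nat.factorial_ne_zero _)
  have h2 : ((m:ℝ)+n+1) ≠ 0 := by positivity
  field_simp

instance nu_prob : IsProbabilityMeasure (volume.restrict (Set.Icc (0:ℝ) 1)) :=
  ⟨by rw [Measure.restrict_apply_univ, Real.volume_Icc]; norm_num⟩

lemma pi_int (m : ℕ) : ∀ (n : ℕ) (s : ℝ),
    (∫ z, (s + ∑ i, z i)^m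
        ∂(Measure.pi fun _ : Fin n => volume.restrict (Set.Icc (0:ℝ) 1)))
      = Fm n m s := by
  intro n
  induction n with
  | zero =>
    intro s
    simp only [Finset.univ_eq_empty, Finset.sum_empty, add_zero]
    rw [integral_const, probReal_univ]
    simp [Fm, Nat.factorial_ne_zero, div_self]
  | succ n ih =>
    intro s
    set ν := volume.restrict (Set.Icc (0:ℝ) 1) with hν
    set pin := Measure.pi fun _ : Fin n => ν with hpin
    have hint : (∫ z, (s + ∑ i, z i)^m ∂(Measure.pi fun _ : Fin (n+1) => ν))
        = ∫ p, (s + p.1 + ∑ i, p.2 i)^m ∂(ν.prod pin) := by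
      rw [← (measurePreserving_piFinSuccAbove (fun _ : Fin (n+1) => ν) 0).integral_comp
        (MeasurableEquiv.measurableEmbedding _) (fun p => (s + p.1 + ∑ i, p.2 i)^m)]
      refine integral_congr_ae (Filter.Eventually.of_forall fun z => ?_)
      simp [MeasurableEquiv.piFinSuccAbove, Fin.sum_univ_succ, Fin.insertNthEquiv,
        Fin.tail, add_assoc]
    -- integrability
    have hmem : ∀ᵐ p ∂(ν.prod pin),
        p ∈ (Set.Icc (0:ℝ) 1) ×ˢ (Set.pi Set.univ fun _ : Fin n => Set.Icc (0:ℝ) 1) := by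
      rw [Measure.ae_prod_mem_iff_ae_ae_mem
        (measurableSet_Icc.prod (MeasurableSet.univ_pi fun _ => measurableSet_Icc))]
      have h1 : ∀ᵐ t ∂ν, t ∈ Set.Icc (0:ℝ) 1 := ae_restrict_mem measurableSet_Icc
      filter_upwards [h1] with t ht
      have hS : pin (Set.pi Set.univ fun _ : Fin n => Set.Icc (0:ℝ) 1) = 1 := by
        rw [hpin, Measure.pi_pi]
        have : ν (Set.Icc (0:ℝ) 1) = 1 := by
          rw [hν, Measure.restrict_apply measurableSet_Icc, Set.inter_self, Real.volume_Icc]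
          norm_num
        simp [this]
      have h2 := (prob_compl_eq_zero_iff
        (MeasurableSet.univ_pi fun _ : Fin n => measurableSet_Icc)).mpr hS
      have h3 : ∀ᵐ y ∂pin, y ∈ Set.pi Set.univ fun _ : Fin n => Set.Icc (0:ℝ) 1 :=
        ae_iff.mpr h2
      filter_upwards [h3] with y hy
      exact Set.mem_prod.mpr ⟨ht, hy⟩
    have hbound : ∀ p : ℝ × (Fin n → ℝ),
        p ∈ (Set.Icc (0:ℝ) 1) ×ˢ (Set.pi Set.univ fun _ : Fin n => Set.Icc (0:ℝ) 1) →
        ‖(s + p.1 + ∑ i, p.2 i)^m‖ ≤ (|s| + 1 + n)^m := by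
      rintro ⟨t, z⟩ ⟨ht, hz⟩
      rw [norm_pow, Real.norm_eq_abs]
      apply pow_le_pow_left₀ (abs_nonneg _)
      have h1 : |t| ≤ 1 := abs_le.mpr ⟨by linarith [ht.1], ht.2⟩
      have h2 : |∑ i, z i| ≤ (n:ℝ) := by
        calc |∑ i, z i| ≤ ∑ i, |z i| := Finset.abs_sum_le_sum_abs _ _
        _ ≤ ∑ _i : Fin n, (1:ℝ) := Finset.sum_le_sum fun i _ => by
            have := hz i (Set.mem_univ i)
            exact abs_le.mpr ⟨by linarith [this.1], this.2⟩
        _ = n := by simp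
      calc |s + t + ∑ i, z i| ≤ |s| + |t| + |∑ i, z i| := by
            exact (abs_add_le _ _).trans (by linarith [abs_add_le s t, abs_nonneg (∑ i, z i)])
        _ ≤ |s| + 1 + n := by linarith
    have hInt : Integrable (fun p : ℝ × (Fin n → ℝ) => (s + p.1 + ∑ i, p.2 i)^m)
        (ν.prod pin) := by
      refine Integrable.mono' (integrable_const ((|s| + 1 + (n:ℝ))^m)) ?_ ?_
      · exact (Continuous.aestronglyMeasurable (by fun_prop))
      · filter_upwards [hmem] with p hp using hbound p hp
    rw [hint, MeasureTheory.integral_prod _ hInt]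
    simp_rw [ih]
    exact Fm_step n m s

lemma map_eq_pi {Ω : Type*} [MeasurableSpace Ω] (μ : Measure Ω) [IsProbabilityMeasure μ]
    {n : ℕ} (X : Fin n → Ω → ℝ) (hmeas : ∀ i, Measurable (X i))
    (hindep : iIndepFun X μ)
    (hlaw : ∀ i, Measure.map (X i) μ = volume.restrict (Set.Icc (0:ℝ) 1)) :
    Measure.map (fun ω i => X i ω) μ
      = Measure.pi fun _ : Fin n => volume.restrict (Set.Icc (0:ℝ) 1) := by
  symm
  apply Measure.pi_eq
  intro s hs
  rw [Measure.map_apply (measurable_pi_iff.mpr hmeas) (MeasurableSet.univ_pi hs)]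
  have hpre : (fun ω i => X i ω) ⁻¹' Set.pi Set.univ s = ⋂ i, X i ⁻¹' s i := by
    ext ω; simp [Set.mem_pi]
  rw [hpre, hindep.meas_iInter (fun i => ⟨s i, hs i, rfl⟩)]
  refine Finset.prod_congr rfl fun i _ => ?_
  rw [← hlaw i, Measure.map_apply (hmeas i) (hs i)]

/-- If `X₁, …, Xₙ` (`n ≥ 1`) are i.i.d. uniform random variables on `[0, 1]`
(density `1` on `[0, 1]` and `0` elsewhere), then for every integer `m ≥ 0`
the `m`-th moment of `Sₙ = X₁ + ⋯ + Xₙ` is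
`E[Sₙ^m] = S(m+n, n) · m! · n! / (m+n)!`,
where `S` is the Stirling number of the second kind. -/
theorem moment_sum_iid_uniform_eq_stirling
    {Ω : Type*} [MeasurableSpace Ω] (μ : Measure Ω) [IsProbabilityMeasure μ]
    (n m : ℕ) (hn : 1 ≤ n)
    (X : Fin n → Ω → ℝ) (hmeas : ∀ i, Measurable (X i))
    (hindep : iIndepFun X μ)
    (hlaw : ∀ i, Measure.map (X i) μ =
      volume.withDensity fun x =>
        ENNReal.ofReal (if x ∈ Set.Icc (0 : ℝ) 1 then 1 else 0)) :
    ∫ ω, (∑ i : Fin n, X i ω) ^ m ∂μ =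
      (stirlingSecond (m + n) n : ℝ) * (m.factorial : ℝ) * (n.factorial : ℝ) /
        ((m + n).factorial : ℝ) := by
  have hres : ∀ i, Measure.map (X i) μ = volume.restrict (Set.Icc (0:ℝ) 1) := by
    intro i
    rw [hlaw i]
    have hd : (fun x : ℝ => ENNReal.ofReal (if x ∈ Set.Icc (0:ℝ) 1 then 1 else 0))
        = (Set.Icc (0:ℝ) 1).indicator 1 := by
      funext x
      by_cases hx : x ∈ Set.Icc (0:ℝ) 1 <;> simp [hx, Set.indicator_apply]
    rw [hd, withDensity_indicator_one measurableSet_Icc]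
  have hmap := map_eq_pi μ X hmeas hindep hres
  have hint : ∫ ω, (∑ i, X i ω)^m ∂μ
      = ∫ z, (∑ i : Fin n, z i)^m
          ∂(Measure.pi fun _ : Fin n => volume.restrict (Set.Icc (0:ℝ) 1)) := by
    rw [← hmap, integral_map (measurable_pi_iff.mpr hmeas).aemeasurable
      (Continuous.aestronglyMeasurable (by fun_prop))]
  rw [hint]
  have hpi := pi_int m n 0
  simp only [zero_add] at hpi
  rw [hpi]
  unfold Fm
  have hzero : ∑ j ∈ range (n+1), (-1:ℝ)^j * (n.choose j : ℝ) * ((0:ℝ) + n - j)^(m+n)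
      = ∑ j ∈ range (n+1), (-1:ℝ)^j * (n.choose j : ℝ) * ((n:ℝ) - j)^(m+n) := by
    refine Finset.sum_congr rfl fun j _ => by rw [zero_add]
  rw [hzero, stirling_alt (m+n) n]
  have h1 : ((m+n).factorial : ℝ) ≠ 0 := Nat.cast_ne_zero.mpr (Nat.factorial_ne_zero _)
  field_simp
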